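/- arXiv:2109.14582 — 5 statements merged into one kernel-verified Lean document; each statement's English description precedes it below -/
import Mathlib

section
/- Identify the element x = ω₊p + ω₋q of H ⊕ H (with p, q ∈ H and ω₊ = (1,0), ω₋ = (0,1)) and define its conjugate by x̄ = ω₊p^c + ω₋q^c, its trace t(x) = x + x̄, and its norm n(x) = x·x̄. Then x lies in the quadratic cone (i.e. t(x) and n(x) are 'real', meaning both components equal and real, with 4n(x) ≥ t(x)² when x is non-real) if and only if Re(p) = Re(q) and |Im(p)| = |Im(q)|. -/
lemma normSq_eq_re_sq_add_norm_im_sq (p : Quaternion ℝ) :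
    Quaternion.normSq p = p.re ^ 2 + ‖p.im‖ ^ 2 := by
  have h : ‖p.im‖ ^ 2 = Quaternion.normSq p.im := by
    rw [Quaternion.normSq_eq_norm_mul_self, sq]
  rw [h, Quaternion.normSq_def', Quaternion.normSq_def']
  simp [Quaternion.im, QuaternionAlgebra.im]
  ring

/-- `x = ω₊p + ω₋q ∈ ℍ ⊕ ℍ` lies in the quadratic cone iff `Re p = Re q` and
`|Im p| = |Im q|`. -/
theorem mem_quadratic_cone_iff (p q : Quaternion ℝ) :
    ((∃ r : ℝ, p = (r : Quaternion ℝ) ∧ q = (r : Quaternion ℝ)) ∨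
      (∃ t n : ℝ, p + star p = (t : Quaternion ℝ) ∧ q + star q = (t : Quaternion ℝ) ∧
        p * star p = (n : Quaternion ℝ) ∧ q * star q = (n : Quaternion ℝ) ∧
        t ^ 2 < 4 * n))
    ↔ (p.re = q.re ∧ ‖p.im‖ = ‖q.im‖) := by
  constructor
  · rintro (⟨r, hp, hq⟩ | ⟨t, n, hpt, hqt, hpn, hqn, hlt⟩)
    · subst hp hq; simp
    · have h1 : 2 * p.re = t := Quaternion.coe_injective (p.self_add_star'.symm.trans hpt)
      have h2 : 2 * q.re = t := Quaternion.coe_injective (q.self_add_star'.symm.trans hqt)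
      have h3 : Quaternion.normSq p = n := Quaternion.coe_injective (p.self_mul_star.symm.trans hpn)
      have h4 : Quaternion.normSq q = n := Quaternion.coe_injective (q.self_mul_star.symm.trans hqn)
      have hre : p.re = q.re := by linarith
      refine ⟨hre, ?_⟩
      have e1 := normSq_eq_re_sq_add_norm_im_sq p
      have e2 := normSq_eq_re_sq_add_norm_im_sq q
      rw [h3] at e1; rw [h4] at e2; rw [hre] at e1
      have hsq : ‖p.im‖ ^ 2 = ‖q.im‖ ^ 2 := by linarith
      have := congrArg Real.sqrt hsq
      rwa [Real.sqrt_sq (norm_nonneg _), Real.sqrt_sq (norm_nonneg _)] at this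
  · rintro ⟨hre, him⟩
    by_cases h : p.im = 0
    · left
      have hq0 : q.im = 0 := by
        have : ‖q.im‖ = 0 := by rw [← him, h, norm_zero]
        exact norm_eq_zero.mp this
      refine ⟨p.re, ?_, ?_⟩
      · have hp := p.re_add_im; rw [h, add_zero] at hp; exact hp.symm
      · have hq := q.re_add_im; rw [hq0, add_zero] at hq; rw [hre]; exact hq.symm
    · right
      refine ⟨2 * p.re, Quaternion.normSq p, p.self_add_star', ?_, p.self_mul_star, ?_, ?_⟩
      · rw [q.self_add_star', hre]
      · rw [q.self_mul_star]
        congr 1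
        rw [normSq_eq_re_sq_add_norm_im_sq, normSq_eq_re_sq_add_norm_im_sq, hre, him]
      · have him_pos : 0 < ‖p.im‖ := norm_pos_iff.mpr h
        rw [normSq_eq_re_sq_add_norm_im_sq]
        nlinarith
end

section
/- Let a₁ ∈ H be a non-real quaternion. Then the set of quaternions p satisfying p² - 2Re(a₁)p + |a₁|² = 0 is exactly the 2-sphere {Re(a₁) + I·|Im(a₁)| : I ∈ H, I² = -1}. Consequently, for α = ω₊a₁ + ω₋a₂ in H ⊕ H with a₁, a₂ non-real, the zero set of p(x) = x² - x(α+α̅) + αα̅ is the product of the 2-sphere through a₁ with the 2-sphere through a₂. -/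
open Quaternion

lemma im_norm_sq (q : Quaternion ℝ) : ‖q.im‖ ^ 2 = q.imI ^ 2 + q.imJ ^ 2 + q.imK ^ 2 := by
  have := Quaternion.normSq_eq_norm_mul_self q.im
  rw [Quaternion.normSq_def'] at this
  simp only [Quaternion.re_im, Quaternion.imI_im, Quaternion.imJ_im, Quaternion.imK_im] at this
  nlinarith [this]

lemma root_iff (a p : Quaternion ℝ) (ha : a.im ≠ 0) :
    p ^ 2 - ((2 * a.re : ℝ) : Quaternion ℝ) * p + ((Quaternion.normSq a : ℝ) : Quaternion ℝ) = 0 ↔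
      p.re = a.re ∧ ‖p.im‖ = ‖a.im‖ := by
  have hno : (0:ℝ) < ‖a.im‖ := norm_pos_iff.mpr ha
  have hns : (Quaternion.normSq a : ℝ) = a.re ^ 2 + ‖a.im‖ ^ 2 := by
    rw [Quaternion.normSq_def', im_norm_sq]; ring
  have hp2 := im_norm_sq p
  constructor
  · intro h
    rw [Quaternion.ext_iff] at h
    simp only [Quaternion.re_sub, Quaternion.re_add, Quaternion.imI_sub, Quaternion.imI_add,
      Quaternion.imJ_sub, Quaternion.imJ_add, Quaternion.imK_sub, Quaternion.imK_add,
      pow_two, Quaternion.re_mul, Quaternion.imI_mul, Quaternion.imJ_mul, Quaternion.imK_mul,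
      Quaternion.re_coe, Quaternion.imI_coe, Quaternion.imJ_coe, Quaternion.imK_coe,
      Quaternion.re_zero, Quaternion.imI_zero, Quaternion.imJ_zero, Quaternion.imK_zero] at h
    obtain ⟨hre, hi, hj, hk⟩ := h
    have hcase : p.re = a.re := by
      by_contra hne
      have hi' : p.imI = 0 := by
        have : p.imI * (2 * p.re - 2 * a.re) = 0 := by linarith
        rcases mul_eq_zero.mp this with h | h
        · exact h
        · exact absurd (by linarith) hne
      have hj' : p.imJ = 0 := by
        have : p.imJ * (2 * p.re - 2 * a.re) = 0 := by linarith
        rcases mul_eq_zero.mp this with h | h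
        · exact h
        · exact absurd (by linarith) hne
      have hk' : p.imK = 0 := by
        have : p.imK * (2 * p.re - 2 * a.re) = 0 := by linarith
        rcases mul_eq_zero.mp this with h | h
        · exact h
        · exact absurd (by linarith) hne
      rw [hi', hj', hk', hns] at hre
      nlinarith [sq_nonneg (p.re - a.re)]
    refine ⟨hcase, ?_⟩
    rw [hns] at hre
    have : ‖p.im‖ ^ 2 = ‖a.im‖ ^ 2 := by rw [hp2]; nlinarith [hcase]
    nlinarith [norm_nonneg p.im, norm_nonneg a.im]
  · rintro ⟨hre, him⟩
    have h2 : p.imI ^ 2 + p.imJ ^ 2 + p.imK ^ 2 = ‖a.im‖ ^ 2 := by rw [← hp2, him]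
    rw [Quaternion.ext_iff]
    simp only [Quaternion.re_sub, Quaternion.re_add, Quaternion.imI_sub, Quaternion.imI_add,
      Quaternion.imJ_sub, Quaternion.imJ_add, Quaternion.imK_sub, Quaternion.imK_add,
      pow_two, Quaternion.re_mul, Quaternion.imI_mul, Quaternion.imJ_mul, Quaternion.imK_mul,
      Quaternion.re_coe, Quaternion.imI_coe, Quaternion.imJ_coe, Quaternion.imK_coe,
      Quaternion.re_zero, Quaternion.imI_zero, Quaternion.imJ_zero, Quaternion.imK_zero]
    rw [hns]
    refine ⟨by linear_combination (p.re - a.re) * hre - h2, by linear_combination (2*p.imI)*hre,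
      by linear_combination (2*p.imJ)*hre, by linear_combination (2*p.imK)*hre⟩

lemma sphere_iff (a p : Quaternion ℝ) (ha : a.im ≠ 0) :
    (∃ I : Quaternion ℝ, I ^ 2 = -1 ∧ p = ((a.re : ℝ) : Quaternion ℝ) + ‖a.im‖ • I) ↔
      p.re = a.re ∧ ‖p.im‖ = ‖a.im‖ := by
  have hno : (0:ℝ) < ‖a.im‖ := norm_pos_iff.mpr ha
  constructor
  · rintro ⟨I, hI, rfl⟩
    have hnI : ‖I‖ = 1 := by
      have h1 : ‖I‖ * ‖I‖ = 1 := by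
        have := congrArg norm hI
        rwa [pow_two, norm_mul, norm_neg, norm_one] at this
      nlinarith [norm_nonneg I]
    have hre : I.re = 0 := by
      rw [← Quaternion.sq_eq_neg_normSq, Quaternion.normSq_eq_norm_mul_self, hnI]
      simpa using hI
    have him : I.im = I := by
      conv_rhs => rw [← Quaternion.re_add_im I]
      rw [hre]; simp
    constructor
    · simp [hre]
    · simp only [Quaternion.im_add, Quaternion.im_coe, Quaternion.im_smul, zero_add, him]
      rw [norm_smul]
      simp [hnI, abs_of_pos hno]
  · rintro ⟨hre, him⟩
    have hpim : p.im ≠ 0 := by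
      intro h0
      rw [h0, norm_zero] at him
      exact hno.ne him
    have hnp : (0:ℝ) < ‖p.im‖ := norm_pos_iff.mpr hpim
    refine ⟨‖a.im‖⁻¹ • p.im, ?_, ?_⟩
    · rw [Quaternion.sq_eq_neg_normSq.mpr (by simp), Quaternion.normSq_eq_norm_mul_self,
        norm_smul, him]
      rw [Real.norm_eq_abs, abs_of_pos (inv_pos.mpr hno), inv_mul_cancel₀ hno.ne']
      simp
    · rw [smul_smul, mul_inv_cancel₀ hno.ne', one_smul, ← hre, Quaternion.re_add_im]

/-- The zero set of the characteristic polynomial of a non-real quaternion is a 2-sphere,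
and in `ℍ ⊕ ℍ` the zero set of `x² - x(α+α̅) + αα̅` is a product of two 2-spheres. -/
theorem zero_set_characteristic_poly (a₁ a₂ : Quaternion ℝ)
    (h₁ : a₁.im ≠ 0) (h₂ : a₂.im ≠ 0) :
    ({p : Quaternion ℝ |
        p ^ 2 - ((2 * a₁.re : ℝ) : Quaternion ℝ) * p
          + ((Quaternion.normSq a₁ : ℝ) : Quaternion ℝ) = 0}
      = {p : Quaternion ℝ | ∃ I : Quaternion ℝ, I ^ 2 = -1 ∧
          p = ((a₁.re : ℝ) : Quaternion ℝ) + ‖a₁.im‖ • I}) ∧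
    ({x : Quaternion ℝ × Quaternion ℝ |
        x ^ 2 - x * ((a₁, a₂) + star (a₁, a₂)) + (a₁, a₂) * star (a₁, a₂) = 0}
      = ({p : Quaternion ℝ | ∃ I : Quaternion ℝ, I ^ 2 = -1 ∧
            p = ((a₁.re : ℝ) : Quaternion ℝ) + ‖a₁.im‖ • I} ×ˢ
          {p : Quaternion ℝ | ∃ I : Quaternion ℝ, I ^ 2 = -1 ∧
            p = ((a₂.re : ℝ) : Quaternion ℝ) + ‖a₂.im‖ • I})) := by
  have hset : ∀ a : Quaternion ℝ, a.im ≠ 0 →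
      ({p : Quaternion ℝ | p ^ 2 - ((2 * a.re : ℝ) : Quaternion ℝ) * p
          + ((Quaternion.normSq a : ℝ) : Quaternion ℝ) = 0}
        = {p : Quaternion ℝ | ∃ I : Quaternion ℝ, I ^ 2 = -1 ∧
            p = ((a.re : ℝ) : Quaternion ℝ) + ‖a.im‖ • I}) := by
    intro a ha
    ext p
    simp only [Set.mem_setOf_eq]
    rw [root_iff a p ha, ← sphere_iff a p ha]
  refine ⟨hset a₁ h₁, ?_⟩
  ext x
  rw [Set.mem_prod, ← hset a₁ h₁, ← hset a₂ h₂]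
  simp only [Set.mem_setOf_eq]
  have hx : x ^ 2 - x * ((a₁, a₂) + star (a₁, a₂)) + (a₁, a₂) * star (a₁, a₂)
      = (x.1 ^ 2 - ((2 * a₁.re : ℝ) : Quaternion ℝ) * x.1 + ((Quaternion.normSq a₁ : ℝ) : Quaternion ℝ),
         x.2 ^ 2 - ((2 * a₂.re : ℝ) : Quaternion ℝ) * x.2 + ((Quaternion.normSq a₂ : ℝ) : Quaternion ℝ)) := by
    rw [Prod.ext_iff]
    constructor
    · simp only [Prod.fst_add, Prod.fst_sub, Prod.fst_mul, Prod.pow_fst, Prod.fst_star]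
      rw [Quaternion.self_add_star', Quaternion.self_mul_star, ← Quaternion.coe_commutes]
    · simp only [Prod.snd_add, Prod.snd_sub, Prod.snd_mul, Prod.pow_snd, Prod.snd_star]
      rw [Quaternion.self_add_star', Quaternion.self_mul_star, ← Quaternion.coe_commutes]
  rw [hx, Prod.ext_iff]
  simp
end

section
/- Let a, b ∈ H with a ≠ b^c and a, b lying on the same sphere (i.e. Re(a) = Re(b), |Im(a)| = |Im(b)|), both non-real. Then the only quaternionic zero of p(x) = x² - x(a+b) + ab is x = a; in particular x = b is not a zero unless b = a. -/
open Quaternion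

/-- If `a ≠ b^c` lie on the same sphere, the only quaternionic zero of
`x² - x(a+b) + ab` is `x = a`; in particular `b` is a zero only if `b = a`. -/
theorem zero_set_same_sphere (a b : Quaternion ℝ)
    (ha : a.im ≠ 0) (hb : b.im ≠ 0) (hne : a ≠ star b)
    (hre : a.re = b.re) (him : ‖a.im‖ = ‖b.im‖) :
    (∀ x : Quaternion ℝ, x ^ 2 - x * (a + b) + a * b = 0 ↔ x = a) ∧
    (b ^ 2 - b * (a + b) + a * b = 0 → b = a) := by
  have hnorm : normSq a = normSq b := by
    have h2 : normSq a.im = normSq b.im := by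
      rw [normSq_eq_norm_mul_self, normSq_eq_norm_mul_self, him]
    rw [normSq_def', normSq_def'] at h2 ⊢
    simp only [re_im, imI_im, imJ_im, imK_im] at h2
    rw [hre]; linarith
  have hsb : star a - b ≠ 0 := by
    intro h
    exact hne (by rw [← sub_eq_zero.mp h, star_star])
  have hmain : ∀ x : Quaternion ℝ, x ^ 2 - x * (a + b) + a * b = 0 ↔ x = a := by
    intro x
    constructor
    · intro hx
      by_cases hxa : x = a
      · exact hxa
      · have hq : x - a ≠ 0 := sub_ne_zero.mpr hxa
        -- x * (x - a) = (x - a) * b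
        have key : x * (x - a) = (x - a) * b := by
          have h : x * (x - a) - (x - a) * b = x ^ 2 - x * (a + b) + a * b := by
            noncomm_ring
          rw [hx] at h
          exact sub_eq_zero.mp h
        -- x = (x-a) * b * (x-a)⁻¹
        have hxb : x = (x - a) * b * (x - a)⁻¹ := by
          rw [eq_mul_inv_iff_mul_eq₀ hq, key]
        have hrex : x.re = b.re := by
          rw [hxb]
          have : ((x - a) * (b * (x - a)⁻¹)).re = ((b * (x - a)⁻¹) * (x - a)).re := by
            simp only [re_mul]; ring
          rw [mul_assoc, this, mul_assoc, inv_mul_cancel₀ hq, mul_one]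
        have hnx : normSq x = normSq a := by
          rw [hnorm, hxb, map_mul, map_mul, map_inv₀, mul_comm,
            inv_mul_cancel_left₀ (normSq_ne_zero.mpr hq)]
        -- the characteristic identity for x, with a's data
        have hid : x ^ 2 - ((2 * a.re : ℝ) : Quaternion ℝ) * x
            + ((normSq a : ℝ) : Quaternion ℝ) = 0 := by
          have h1 : ((2 * x.re : ℝ) : Quaternion ℝ) = x + star x :=
            (self_add_star' x).symm
          have h2 : ((normSq x : ℝ) : Quaternion ℝ) = star x * x :=
            (star_mul_self x).symm
          rw [← hnx, hre, ← hrex, h1, h2]; noncomm_ring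
        -- same identity for a
        have hida : a ^ 2 - ((2 * a.re : ℝ) : Quaternion ℝ) * a
            + ((normSq a : ℝ) : Quaternion ℝ) = 0 := by
          rw [← self_add_star' a, ← star_mul_self a]; noncomm_ring
        -- combine to factor
        have hfac : (x - a) * (((2 * a.re : ℝ) : Quaternion ℝ) - a - b) = 0 := by
          have hc1 : ((2 * a.re : ℝ) : Quaternion ℝ) * x = x * ((2 * a.re : ℝ) : Quaternion ℝ) :=
            coe_commutes _ _
          have hc2 : ((2 * a.re : ℝ) : Quaternion ℝ) * a = a * ((2 * a.re : ℝ) : Quaternion ℝ) :=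
            coe_commutes _ _
          have expand : (x - a) * (((2 * a.re : ℝ) : Quaternion ℝ) - a - b)
              = (x ^ 2 - x * (a + b) + a * b)
                - (x ^ 2 - ((2 * a.re : ℝ) : Quaternion ℝ) * x + ((normSq a : ℝ) : Quaternion ℝ))
                + (a ^ 2 - ((2 * a.re : ℝ) : Quaternion ℝ) * a + ((normSq a : ℝ) : Quaternion ℝ))
                - (((2 * a.re : ℝ) : Quaternion ℝ) * x - x * ((2 * a.re : ℝ) : Quaternion ℝ))
                + (((2 * a.re : ℝ) : Quaternion ℝ) * a - a * ((2 * a.re : ℝ) : Quaternion ℝ)) := by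
            noncomm_ring
          rw [expand, hx, hid, hida, hc1, hc2]
          noncomm_ring
        have h2' : ((2 * a.re : ℝ) : Quaternion ℝ) - a - b = star a - b := by
          rw [← self_add_star' a]; noncomm_ring
        rw [h2'] at hfac
        rcases mul_eq_zero.mp hfac with h | h
        · exact sub_eq_zero.mp h
        · exact absurd h hsb
    · intro hx
      rw [hx]; noncomm_ring
  exact ⟨hmain, fun h => (hmain b).mp h⟩
end

section
/- Let a, b ∈ H be non-real quaternions not lying on the same sphere (i.e. (Re(a), |Im(a)|) ≠ (Re(b), |Im(b)|)). Then the zero set of p(x) = x² - x(a+b) + ab in H is exactly {a, (b - a^c)⁻¹ b (b - a^c)}, and these two zeros are distinct. -/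
open Quaternion

local notation "H" => Quaternion ℝ

private lemma quat_char (b : H) :
    b ^ 2 - ((2 * b.re : ℝ) : H) * b + ((normSq b : ℝ) : H) = 0 := by
  ext <;> simp [Quaternion.normSq_def', pow_two, Quaternion.re_mul, Quaternion.imI_mul,
    Quaternion.imJ_mul, Quaternion.imK_mul] <;> ring

private lemma quat_commB (a b : H) :
    (b * (b - star a) - (b - star a) * a) * b
      = b * (b * (b - star a) - (b - star a) * a) := by
  ext <;> simp [Quaternion.re_mul, Quaternion.imI_mul,
    Quaternion.imJ_mul, Quaternion.imK_mul] <;> ring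

private lemma quat_qv (a b : H) :
    ((b - star a) * (a - star b)) * b = b * ((b - star a) * (a - star b)) := by
  ext <;> simp [Quaternion.re_mul, Quaternion.imI_mul,
    Quaternion.imJ_mul, Quaternion.imK_mul] <;> ring

private lemma quat_id4 (a b x : H) :
    x * (a - star b) - (a - star b) * b
      = (x ^ 2 - ((2 * b.re : ℝ) : H) * x + ((normSq b : ℝ) : H))
        - (x ^ 2 - x * (a + b) + a * b) := by
  ext <;> simp [Quaternion.normSq_def', pow_two, Quaternion.re_mul, Quaternion.imI_mul,
    Quaternion.imJ_mul, Quaternion.imK_mul] <;> ring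

private lemma quat_id5 (b u : H) :
    (u * b) * b - ((2 * b.re : ℝ) : H) * (u * b) + ((normSq b : ℝ) : H) * u
      = u * (b ^ 2 - ((2 * b.re : ℝ) : H) * b + ((normSq b : ℝ) : H)) := by
  ext <;> simp [Quaternion.normSq_def', pow_two, Quaternion.re_mul, Quaternion.imI_mul,
    Quaternion.imJ_mul, Quaternion.imK_mul] <;> ring

private lemma quat_id6 (a b : H) :
    b ^ 2 - ((2 * a.re : ℝ) : H) * b + ((normSq a : ℝ) : H)
      = b * (b - star a) - (b - star a) * a := by
  ext <;> simp [Quaternion.normSq_def', pow_two, Quaternion.re_mul, Quaternion.imI_mul,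
    Quaternion.imJ_mul, Quaternion.imK_mul] <;> ring

private lemma norm_im_eq_of (a b : H) (h : normSq a = normSq b) (hre : a.re = b.re) :
    ‖a.im‖ = ‖b.im‖ := by
  rw [norm_eq_sqrt_real_inner, norm_eq_sqrt_real_inner]
  congr 1
  rw [Quaternion.normSq_def', Quaternion.normSq_def'] at h
  show normSq a.im = normSq b.im
  rw [Quaternion.normSq_def', Quaternion.normSq_def']
  simp only [Quaternion.re_im, Quaternion.imI_im, Quaternion.imJ_im, Quaternion.imK_im]
  rw [hre] at h
  linarith

private lemma char_sub (a b : H)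
    (h : b ^ 2 - ((2 * a.re : ℝ) : H) * b + ((normSq a : ℝ) : H) = 0)
    (hb : b.im ≠ 0) (hsphere : ¬(a.re = b.re ∧ ‖a.im‖ = ‖b.im‖)) : False := by
  have hB := quat_char b
  have hC : ((2 * b.re - 2 * a.re : ℝ) : H) * b - ((normSq b - normSq a : ℝ) : H)
      = (b ^ 2 - ((2 * a.re : ℝ) : H) * b + ((normSq a : ℝ) : H))
        - (b ^ 2 - ((2 * b.re : ℝ) : H) * b + ((normSq b : ℝ) : H)) := by
    push_cast
    noncomm_ring
  rw [h, hB, sub_self] at hC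
  have hC' : ((2 * b.re - 2 * a.re : ℝ) : H) * b = ((normSq b - normSq a : ℝ) : H) :=
    sub_eq_zero.mp hC
  have hre : a.re = b.re := by
    by_contra hne
    have ht : (2 * b.re - 2 * a.re : ℝ) ≠ 0 := by
      intro h0; apply hne; linarith
    apply hb
    have hI := congrArg QuaternionAlgebra.imI hC'
    have hJ := congrArg QuaternionAlgebra.imJ hC'
    have hK := congrArg QuaternionAlgebra.imK hC'
    simp only [Quaternion.imI_mul, Quaternion.imJ_mul, Quaternion.imK_mul,
      Quaternion.re_coe, Quaternion.imI_coe, Quaternion.imJ_coe, Quaternion.imK_coe] at hI hJ hK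
    have hI' : (2 * b.re - 2 * a.re) * b.imI = 0 := by linear_combination hI
    have hJ' : (2 * b.re - 2 * a.re) * b.imJ = 0 := by linear_combination hJ
    have hK' : (2 * b.re - 2 * a.re) * b.imK = 0 := by linear_combination hK
    have hI0 : b.imI = 0 := by
      rcases mul_eq_zero.mp hI' with h0 | h0
      · exact absurd h0 ht
      · exact h0
    have hJ0 : b.imJ = 0 := by
      rcases mul_eq_zero.mp hJ' with h0 | h0
      · exact absurd h0 ht
      · exact h0
    have hK0 : b.imK = 0 := by
      rcases mul_eq_zero.mp hK' with h0 | h0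
      · exact absurd h0 ht
      · exact h0
    ext <;> simp [hI0, hJ0, hK0]
  have hn : normSq a = normSq b := by
    have hR := congrArg QuaternionAlgebra.re hC'
    simp only [Quaternion.re_mul, Quaternion.re_coe, Quaternion.imI_coe, Quaternion.imJ_coe,
      Quaternion.imK_coe] at hR
    rw [hre] at hR
    ring_nf at hR
    linarith
  exact hsphere ⟨hre, norm_im_eq_of a b hn hre⟩

/-- If the non-real quaternions `a, b` do not lie on the same sphere, then the zero set of
`x² - x(a+b) + ab` is exactly `{a, (b - a^c)⁻¹ b (b - a^c)}`, and these zeros are distinct. -/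
theorem zero_set_different_spheres (a b : Quaternion ℝ)
    (ha : a.im ≠ 0) (hb : b.im ≠ 0)
    (hsphere : ¬(a.re = b.re ∧ ‖a.im‖ = ‖b.im‖)) :
    ({x : Quaternion ℝ | x ^ 2 - x * (a + b) + a * b = 0}
      = {a, (b - star a)⁻¹ * b * (b - star a)}) ∧
    a ≠ (b - star a)⁻¹ * b * (b - star a) := by
  have hq : (b - star a) ≠ 0 := by
    rw [sub_ne_zero]
    intro h
    exact hsphere ⟨by rw [h, re_star], by rw [h]; simp⟩
  have hv : (a - star b) ≠ 0 := by
    rw [sub_ne_zero]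
    intro h
    exact hsphere ⟨by rw [h, re_star], by rw [h]; simp⟩
  set q : H := b - star a with hqdef
  set c : H := q⁻¹ * b * q with hcdef
  have hqb' : q * c = b * q := by
    rw [hcdef, ← mul_assoc, ← mul_assoc, mul_inv_cancel₀ hq, one_mul]
  -- the factorization criterion
  have hcrit : ∀ x : H, (x ^ 2 - x * (a + b) + a * b = 0) ↔ x * (x - a) = (x - a) * b := by
    intro x
    constructor <;> intro h
    · have hid : x * (x - a) - (x - a) * b = x ^ 2 - x * (a + b) + a * b := by noncomm_ring
      rw [h] at hid
      exact sub_eq_zero.mp hid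
    · have hid : x ^ 2 - x * (a + b) + a * b = x * (x - a) - (x - a) * b := by noncomm_ring
      rw [hid, h, sub_self]
  have hcommB : (b * q - q * a) * b = b * (b * q - q * a) := quat_commB a b
  -- c is a root
  have hcroot : c ^ 2 - c * (a + b) + a * b = 0 := by
    rw [hcrit c]
    apply mul_left_cancel₀ hq
    calc q * (c * (c - a)) = (q * c) * (c - a) := (mul_assoc q c (c - a)).symm
      _ = (b * q) * (c - a) := by rw [hqb']
      _ = b * (q * (c - a)) := mul_assoc b q (c - a)
      _ = b * (q * c - q * a) := by rw [mul_sub q c a]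
      _ = b * (b * q - q * a) := by rw [hqb']
      _ = (b * q - q * a) * b := hcommB.symm
      _ = (q * c - q * a) * b := by rw [hqb']
      _ = (q * (c - a)) * b := by rw [mul_sub q c a]
      _ = q * ((c - a) * b) := mul_assoc q (c - a) b
  have haroot : a ^ 2 - a * (a + b) + a * b = 0 := by noncomm_ring
  -- distinctness
  have hne : a ≠ c := by
    intro heq
    have hqa : q * a = b * q := by rw [heq]; exact hqb'
    have hA : b ^ 2 - ((2 * a.re : ℝ) : H) * b + ((normSq a : ℝ) : H) = 0 := by
      rw [quat_id6 a b, ← hqdef, hqa, sub_self]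
    exact char_sub a b hA hb hsphere
  refine ⟨?_, hne⟩
  ext x
  simp only [Set.mem_setOf_eq, Set.mem_insert_iff, Set.mem_singleton_iff]
  constructor
  · intro hx
    by_cases hxa : x = a
    · exact Or.inl hxa
    right
    have hu : x - a ≠ 0 := sub_ne_zero.mpr hxa
    have hxu : x * (x - a) = (x - a) * b := (hcrit x).mp hx
    have hxs : x ^ 2 - ((2 * b.re : ℝ) : H) * x + ((normSq b : ℝ) : H) = 0 := by
      have step1 : (x ^ 2 - ((2 * b.re : ℝ) : H) * x + ((normSq b : ℝ) : H)) * (x - a)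
          = x * (x * (x - a)) - ((2 * b.re : ℝ) : H) * (x * (x - a))
            + ((normSq b : ℝ) : H) * (x - a) := by noncomm_ring
      rw [hxu] at step1
      rw [show x * ((x - a) * b) = (x * (x - a)) * b from (mul_assoc x (x - a) b).symm,
        hxu] at step1
      rw [quat_id5 b (x - a), quat_char b, mul_zero] at step1
      rcases mul_eq_zero.mp step1 with h | h
      · exact h
      · exact absurd h hu
    have hid := quat_id4 a b x
    rw [hxs, hx, sub_self] at hid
    have hxv : x * (a - star b) = (a - star b) * b := sub_eq_zero.mp hid
    have hqvc : (q * (a - star b)) * b = b * (q * (a - star b)) := quat_qv a b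
    have hqx : q * x = b * q := by
      apply mul_right_cancel₀ hv
      calc (q * x) * (a - star b) = q * (x * (a - star b)) := mul_assoc q x (a - star b)
        _ = q * ((a - star b) * b) := by rw [hxv]
        _ = (q * (a - star b)) * b := (mul_assoc q (a - star b) b).symm
        _ = b * (q * (a - star b)) := hqvc
        _ = (b * q) * (a - star b) := (mul_assoc b q (a - star b)).symm
    have hxe : x = q⁻¹ * (b * q) := by
      rw [← hqx, ← mul_assoc, inv_mul_cancel₀ hq, one_mul]
    rw [hcdef]
    exact hxe.trans (mul_assoc q⁻¹ b q).symm
  · intro hx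
    rcases hx with h | h
    · rw [h]; exact haroot
    · rw [h]; exact hcroot
end

section
/- For quaternions a', b', c', d' with a' invertible, the squared norm of a'(d' - c'(a')⁻¹b') equals |a'|²|d'|² + |c'|²|b'|² - 2Re(d'·(b')^c·a'·(c')^c). -/
/-- For quaternions `a', b', c', d'` with `a'` invertible,
`|a'(d' - c'(a')⁻¹b')|² = |a'|²|d'|² + |c'|²|b'|² - 2Re(d'·b'^c·a'·c'^c)`. -/
theorem normSq_entry_formula (a b c d : Quaternion ℝ) (ha : a ≠ 0) :
    Quaternion.normSq (a * (d - c * a⁻¹ * b))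
      = Quaternion.normSq a * Quaternion.normSq d
        + Quaternion.normSq c * Quaternion.normSq b
        - 2 * (d * star b * a * star c).re := by
  have hA : Quaternion.normSq a ≠ 0 := Quaternion.normSq_ne_zero.2 ha
  have hsub : ∀ x y : Quaternion ℝ,
      Quaternion.normSq (x - y)
        = Quaternion.normSq x + Quaternion.normSq y - 2 * (x * star y).re := by
    intro x y
    rw [sub_eq_add_neg, Quaternion.normSq_add, star_neg, mul_neg]
    simp only [Quaternion.re_neg, Quaternion.normSq_neg]
    ring
  rw [map_mul, hsub]
  have hinv : a⁻¹ = (Quaternion.normSq a)⁻¹ • star a := rfl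
  have hre : (d * star (c * a⁻¹ * b)).re
      = (Quaternion.normSq a)⁻¹ * (d * star b * a * star c).re := by
    rw [hinv]
    simp only [star_mul, Quaternion.star_smul, star_star]
    rw [show star b * ((Quaternion.normSq a)⁻¹ • a * star c)
        = (Quaternion.normSq a)⁻¹ • (star b * (a * star c)) by
      rw [smul_mul_assoc, mul_smul_comm]]
    rw [mul_smul_comm, Quaternion.re_smul, smul_eq_mul]
    ring_nf
    rw [mul_assoc, mul_assoc]
  rw [hre, map_mul, map_mul, Quaternion.normSq_inv]
  field_simp
end
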